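/- Let L be a Lieb function on n×n complex matrices, i.e. L maps n×n complex matrices to the reals and satisfies: (i) 0 ≤ L(M) ≤ L(N) whenever 0 ≤ M ≤ N in the Loewner order; and (ii) |L(M*N)|² ≤ L(M*M)·L(N*N) for all M, N. If X, Y, Z are n×n complex matrices with X, Y positive semidefinite and the block matrix [[X, Z*], [Z, Y]] positive semidefinite, then |L(Z)|² ≤ L(X)·L(Y). -/

import Mathlib

open Matrix ComplexOrder
open scoped Classical

namespace Stmt13Aux

variable {n : ℕ} {X : Matrix (Fin n) (Fin n) ℂ}

/-- Functional calculus built from the spectral theorem. -/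
noncomputable def Phi (hX : X.IsHermitian) (f : ℝ → ℝ) : Matrix (Fin n) (Fin n) ℂ :=
  (hX.eigenvectorUnitary : Matrix (Fin n) (Fin n) ℂ) *
    Matrix.diagonal (RCLike.ofReal ∘ (f ∘ hX.eigenvalues)) *
    (star (hX.eigenvectorUnitary : Matrix (Fin n) (Fin n) ℂ))

lemma Phi_id (hX : X.IsHermitian) : Phi hX (fun t => t) = X := by
  rw [Phi]
  exact (hX.spectral_theorem).symm

lemma Phi_mul (hX : X.IsHermitian) (f g : ℝ → ℝ) :
    Phi hX f * Phi hX g = Phi hX (fun t => f t * g t) := by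
  set U : Matrix (Fin n) (Fin n) ℂ := (hX.eigenvectorUnitary : Matrix (Fin n) (Fin n) ℂ)
    with hUdef
  have hU : star U * U = 1 := Matrix.mem_unitaryGroup_iff'.mp (hX.eigenvectorUnitary).2
  have hdiag : Matrix.diagonal (RCLike.ofReal ∘ f ∘ hX.eigenvalues) *
      Matrix.diagonal (RCLike.ofReal ∘ g ∘ hX.eigenvalues) =
      (Matrix.diagonal (RCLike.ofReal ∘ (fun t => f t * g t) ∘ hX.eigenvalues) :
        Matrix (Fin n) (Fin n) ℂ) := by
    rw [Matrix.diagonal_mul_diagonal]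
    exact congrArg Matrix.diagonal (funext fun i => by simp [Function.comp])
  show U * Matrix.diagonal (RCLike.ofReal ∘ f ∘ hX.eigenvalues) * star U *
      (U * Matrix.diagonal (RCLike.ofReal ∘ g ∘ hX.eigenvalues) * star U) =
      U * Matrix.diagonal (RCLike.ofReal ∘ (fun t => f t * g t) ∘ hX.eigenvalues) * star U
  simp only [Matrix.mul_assoc]
  rw [← Matrix.mul_assoc (star U) U
    (Matrix.diagonal (RCLike.ofReal ∘ g ∘ hX.eigenvalues) * star U), hU, Matrix.one_mul,
    ← Matrix.mul_assoc (Matrix.diagonal (RCLike.ofReal ∘ f ∘ hX.eigenvalues)), hdiag]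

lemma Phi_congr (hX : X.IsHermitian) {f g : ℝ → ℝ}
    (h : ∀ i, f (hX.eigenvalues i) = g (hX.eigenvalues i)) : Phi hX f = Phi hX g := by
  have hd : (RCLike.ofReal ∘ f ∘ hX.eigenvalues : Fin n → ℂ) =
      RCLike.ofReal ∘ g ∘ hX.eigenvalues := by
    funext i
    simp [h i]
  unfold Phi
  rw [hd]

lemma Phi_herm (hX : X.IsHermitian) (f : ℝ → ℝ) : (Phi hX f)ᴴ = Phi hX f := by
  set U : Matrix (Fin n) (Fin n) ℂ := (hX.eigenvectorUnitary : Matrix (Fin n) (Fin n) ℂ)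
  have hd : star (RCLike.ofReal ∘ f ∘ hX.eigenvalues : Fin n → ℂ) =
      RCLike.ofReal ∘ f ∘ hX.eigenvalues := by
    funext i
    simp [RCLike.star_def, RCLike.conj_ofReal]
  show (U * Matrix.diagonal (RCLike.ofReal ∘ f ∘ hX.eigenvalues) * star U)ᴴ =
      U * Matrix.diagonal (RCLike.ofReal ∘ f ∘ hX.eigenvalues) * star U
  rw [Matrix.star_eq_conjTranspose, Matrix.conjTranspose_mul, Matrix.conjTranspose_mul,
    Matrix.diagonal_conjTranspose, hd, Matrix.conjTranspose_conjTranspose, Matrix.mul_assoc]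

/-- If every `M *ᵥ v` vanishes then `M = 0`. -/
lemma eq_zero_of_mulVec {m k : ℕ} (M : Matrix (Fin m) (Fin k) ℂ)
    (h : ∀ v, M *ᵥ v = 0) : M = 0 := by
  ext i j
  have := congr_fun (h (Pi.single j 1)) i
  rwa [Matrix.mulVec_single_one] at this

/-- Kernel inclusion from positivity of the block matrix. -/
lemma ker_incl {X Y Z : Matrix (Fin n) (Fin n) ℂ}
    (hb : (Matrix.fromBlocks X Zᴴ Z Y).PosSemidef)
    (u : Fin n → ℂ) (hu : X *ᵥ u = 0) : Z *ᵥ u = 0 := by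
  set v : Fin n → ℂ := Z *ᵥ u with hv
  set s : ℂ := star v ⬝ᵥ v with hs
  set c : ℂ := star v ⬝ᵥ (Y *ᵥ v) with hc
  have key : ∀ t : ℝ, 0 ≤ 2 * (t : ℂ) * s + c := by
    intro t
    have h2 := hb.dotProduct_mulVec_nonneg (Sum.elim ((t : ℂ) • u) v)
    have hstar : star (Sum.elim ((t : ℂ) • u) v) =
        Sum.elim (star ((t : ℂ) • u)) (star v) := by
      funext i; cases i <;> rfl
    rw [Matrix.fromBlocks_mulVec] at h2
    have hl : (Sum.elim ((t : ℂ) • u) v) ∘ Sum.inl = (t : ℂ) • u := rfl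
    have hr : (Sum.elim ((t : ℂ) • u) v) ∘ Sum.inr = v := rfl
    rw [hl, hr, hstar, sumElim_dotProduct_sumElim] at h2
    have e1 : X *ᵥ ((t : ℂ) • u) = 0 := by rw [Matrix.mulVec_smul, hu, smul_zero]
    have e2 : Z *ᵥ ((t : ℂ) • u) = (t : ℂ) • v := by rw [Matrix.mulVec_smul, hv]
    have e3 : star ((t : ℂ) • u) ⬝ᵥ (Zᴴ *ᵥ v) = (t : ℂ) * s := by
      rw [star_smul, smul_dotProduct, Matrix.dotProduct_mulVec, ← Matrix.star_mulVec,
        ← hv, ← hs]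
      simp [Complex.star_def, Complex.conj_ofReal]
    rw [e1, e2, zero_add, dotProduct_add, e3, dotProduct_smul, ← hc] at h2
    calc (0 : ℂ) ≤ (t : ℂ) * s + ((t : ℂ) • s + c) := h2
    _ = 2 * (t : ℂ) * s + c := by rw [smul_eq_mul]; ring
  -- extract real part information
  have hsnn : (0 : ℂ) ≤ s := dotProduct_star_self_nonneg v
  have hsre : 0 ≤ s.re := by simpa using (Complex.le_def.mp hsnn).1
  have him : s.im = 0 := by simpa using (Complex.le_def.mp hsnn).2.symm
  have keyre : ∀ t : ℝ, 0 ≤ 2 * t * s.re + c.re := by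
    intro t
    have h0 := (Complex.le_def.mp (key t)).1
    simpa [Complex.add_re, Complex.mul_re, Complex.mul_im, him] using h0
  have hsre0 : s.re = 0 := by
    by_contra hne
    have hpos : 0 < s.re := lt_of_le_of_ne hsre (Ne.symm hne)
    have h2s : s.re ≠ 0 := ne_of_gt hpos
    have hfield : 2 * (-(c.re + 1) / (2 * s.re)) * s.re = -(c.re + 1) := by
      field_simp
    have := keyre (-(c.re + 1) / (2 * s.re))
    rw [hfield] at this
    linarith
  have hs0 : s = 0 := Complex.ext (by simpa using hsre0) (by simpa using him)
  exact dotProduct_star_self_eq_zero.mp hs0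

end Stmt13Aux


open Stmt13Aux in
theorem stmt13 {n : ℕ} (L : Matrix (Fin n) (Fin n) ℂ → ℝ)
    (h1 : ∀ M N : Matrix (Fin n) (Fin n) ℂ,
      M.PosSemidef → (N - M).PosSemidef → 0 ≤ L M ∧ L M ≤ L N)
    (h2 : ∀ M N : Matrix (Fin n) (Fin n) ℂ,
      |L (Mᴴ * N)| ^ 2 ≤ L (Mᴴ * M) * L (Nᴴ * N))
    (X Y Z : Matrix (Fin n) (Fin n) ℂ)
    (hX : X.PosSemidef) (hY : Y.PosSemidef)
    (hb : (Matrix.fromBlocks X Zᴴ Z Y).PosSemidef) :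
    |L Z| ^ 2 ≤ L X * L Y := by
  classical
  set hXh := hX.1 with hXh_def
  -- functions for the functional calculus
  set f : ℝ → ℝ := fun t => Real.sqrt t with hf
  set g : ℝ → ℝ := fun t => if t = 0 then 0 else (Real.sqrt t)⁻¹ with hg
  set k : ℝ → ℝ := fun t => if t = 0 then 0 else t⁻¹ with hk
  set h : ℝ → ℝ := fun t => if t = 0 then 0 else 1 with hh
  set A : Matrix (Fin n) (Fin n) ℂ := Phi hXh f with hA
  set Ainv : Matrix (Fin n) (Fin n) ℂ := Phi hXh g with hAinv
  set Xinv : Matrix (Fin n) (Fin n) ℂ := Phi hXh k with hXinv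
  set P : Matrix (Fin n) (Fin n) ℂ := Phi hXh h with hP
  have heig : ∀ i, 0 ≤ hXh.eigenvalues i := hX.eigenvalues_nonneg
  -- A * A = X
  have hA2 : A * A = X := by
    have hphi : Phi hXh f * Phi hXh f = Phi hXh (fun t => t) := by
      rw [Phi_mul]
      exact Phi_congr hXh fun i => Real.mul_self_sqrt (heig i)
    rw [Phi_id hXh] at hphi
    exact hphi
  -- Ainv * Ainv = Xinv
  have hAinv2 : Ainv * Ainv = Xinv := by
    rw [hAinv, hXinv, Phi_mul]
    refine Phi_congr hXh fun i => ?_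
    by_cases hi : hXh.eigenvalues i = 0
    · simp [hg, hk, hi]
    · have hmul : (Real.sqrt (hXh.eigenvalues i))⁻¹ * (Real.sqrt (hXh.eigenvalues i))⁻¹ =
          (hXh.eigenvalues i)⁻¹ := by
        rw [← mul_inv, Real.mul_self_sqrt (heig i)]
      simp [hg, hk, hi, hmul]
  -- Ainv * A = P
  have hAinvA : Ainv * A = P := by
    rw [hAinv, hA, hP, Phi_mul]
    refine Phi_congr hXh fun i => ?_
    by_cases hi : hXh.eigenvalues i = 0
    · simp [hg, hh, hf, hi]
    · have hs : Real.sqrt (hXh.eigenvalues i) ≠ 0 :=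
        Real.sqrt_ne_zero'.mpr (lt_of_le_of_ne (heig i) (Ne.symm hi))
      simp [hg, hh, hf, hi, inv_mul_cancel₀ hs]
  -- Xinv * X = P
  have hXinvX : Xinv * X = P := by
    have hphi : Phi hXh k * Phi hXh (fun t => t) = Phi hXh h := by
      rw [Phi_mul]
      refine Phi_congr hXh fun i => ?_
      by_cases hi : hXh.eigenvalues i = 0
      · simp [hk, hh, hi]
      · simp [hk, hh, hi, inv_mul_cancel₀ hi]
    rw [Phi_id hXh] at hphi
    exact hphi
  -- X * P = X
  have hXP : X * P = X := by
    have hphi : Phi hXh (fun t => t) * Phi hXh h = Phi hXh (fun t => t) := by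
      rw [Phi_mul]
      refine Phi_congr hXh fun i => ?_
      by_cases hi : hXh.eigenvalues i = 0 <;> simp [hh, hi]
    rw [Phi_id hXh] at hphi
    exact hphi
  -- hermitian facts
  have hAH : Aᴴ = A := Phi_herm hXh f
  have hAinvH : Ainvᴴ = Ainv := Phi_herm hXh g
  have hXinvH : Xinvᴴ = Xinv := Phi_herm hXh k
  -- Z * P = Z
  have hZP : Z * P = Z := by
    have hXPm : X * (P - 1) = 0 := by rw [Matrix.mul_sub, hXP, Matrix.mul_one, sub_self]
    have hZPm : Z * (P - 1) = 0 := by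
      apply eq_zero_of_mulVec
      intro v
      have hker : X *ᵥ ((P - 1) *ᵥ v) = 0 := by
        rw [Matrix.mulVec_mulVec, hXPm, Matrix.zero_mulVec]
      have := ker_incl hb ((P - 1) *ᵥ v) hker
      rwa [Matrix.mulVec_mulVec] at this
    have hsub : Z * P - Z = 0 := by
      calc Z * P - Z = Z * (P - 1) := by rw [Matrix.mul_sub, Matrix.mul_one]
      _ = 0 := hZPm
    exact sub_eq_zero.mp hsub
  -- Z * Xinv * X = Z and X * Xinv * Zᴴ = Zᴴ
  have hZXinvX : Z * Xinv * X = Z := by rw [Matrix.mul_assoc, hXinvX, hZP]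
  have hXXinvZ : X * Xinv * Zᴴ = Zᴴ := by
    have : (Z * Xinv * X)ᴴ = Zᴴ := by rw [hZXinvX]
    rw [Matrix.conjTranspose_mul, Matrix.conjTranspose_mul, hXinvH, hX.1.eq] at this
    rw [← Matrix.mul_assoc] at this
    exact this
  -- Schur complement S = Y - Z * Xinv * Zᴴ is PSD
  set S : Matrix (Fin n) (Fin n) ℂ := Y - Z * Xinv * Zᴴ with hS
  have hSpsd : S.PosSemidef := by
    set C : Matrix (Fin n ⊕ Fin n) (Fin n ⊕ Fin n) ℂ :=
      Matrix.fromBlocks 1 0 (-(Z * Xinv)) 1 with hC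
    have hD : (C * (Matrix.fromBlocks X Zᴴ Z Y) * Cᴴ).PosSemidef :=
      hb.mul_mul_conjTranspose_same C
    have hCB : C * (Matrix.fromBlocks X Zᴴ Z Y) =
        Matrix.fromBlocks X Zᴴ 0 S := by
      rw [hC, Matrix.fromBlocks_multiply, Matrix.fromBlocks_inj]
      refine ⟨by simp, by simp, ?_, ?_⟩
      · rw [Matrix.one_mul, Matrix.neg_mul, Matrix.mul_assoc, ← Matrix.mul_assoc Z Xinv X,
          hZXinvX]
        exact neg_add_cancel Z
      · rw [Matrix.one_mul, Matrix.neg_mul, hS, sub_eq_neg_add]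
    have hCH : Cᴴ = Matrix.fromBlocks 1 (-(Xinv * Zᴴ)) 0 1 := by
      rw [hC, Matrix.fromBlocks_conjTranspose]
      congr 1 <;> simp [Matrix.conjTranspose_neg, Matrix.conjTranspose_mul, hXinvH]
    have hfull : C * (Matrix.fromBlocks X Zᴴ Z Y) * Cᴴ =
        Matrix.fromBlocks X 0 0 S := by
      rw [hCB, hCH, Matrix.fromBlocks_multiply, Matrix.fromBlocks_inj]
      refine ⟨by simp, ?_, by simp, by simp⟩
      rw [Matrix.mul_one, Matrix.mul_neg, ← Matrix.mul_assoc, hXXinvZ]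
      exact neg_add_cancel Zᴴ
    rw [hfull] at hD
    have := hD.submatrix Sum.inr
    have hsub : (Matrix.fromBlocks X 0 0 S).submatrix (Sum.inr : Fin n → Fin n ⊕ Fin n)
        Sum.inr = S := rfl
    rwa [hsub] at this
  -- Put M := Ainv * Zᴴ, N := A
  set M : Matrix (Fin n) (Fin n) ℂ := Ainv * Zᴴ with hM
  have hMH : Mᴴ = Z * Ainv := by
    rw [hM, Matrix.conjTranspose_mul, hAinvH, Matrix.conjTranspose_conjTranspose]
  have hMN : Mᴴ * M = Z * Xinv * Zᴴ := by
    rw [hMH, hM, Matrix.mul_assoc, ← Matrix.mul_assoc Ainv Ainv, hAinv2, ← Matrix.mul_assoc]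
  have hMA : Mᴴ * A = Z := by
    rw [hMH, Matrix.mul_assoc, hAinvA, hZP]
  have hAA : Aᴴ * A = X := by rw [hAH, hA2]
  -- apply h2
  have key := h2 M A
  rw [hMA, hMN, hAA] at key
  -- monotonicity
  have hZXZpsd : (Z * Xinv * Zᴴ).PosSemidef := by
    have : Z * Xinv * Zᴴ = Mᴴ * M := hMN.symm
    rw [this]
    exact Matrix.posSemidef_conjTranspose_mul_self M
  have hmono := h1 (Z * Xinv * Zᴴ) Y hZXZpsd (by rwa [← hS])
  have hLX := h1 X X hX (by rw [sub_self]; exact Matrix.PosSemidef.zero)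
  calc |L Z| ^ 2 ≤ L (Z * Xinv * Zᴴ) * L X := key
    _ ≤ L Y * L X := mul_le_mul_of_nonneg_right hmono.2 hLX.1
    _ = L X * L Y := mul_comm _ _
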